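/- Let V be a finite-dimensional vector space over a finite field K, and let U_1, ..., U_m be proper subspaces of V with V nonzero. If V equals the union of U_1, ..., U_m, then m > |K|. -/

import Mathlib

theorem stmt_0 (K V : Type*) [Field K] [Fintype K]
    [AddCommGroup V] [Module K V] [FiniteDimensional K V] [Nontrivial V]
    (m : ℕ) (U : Fin m → Submodule K V)
    (hU : ∀ i, U i ≠ ⊤)
    (hcover : (⋃ i, (U i : Set V)) = Set.univ) :
    m > Fintype.card K := by
  classical
  have : Module.Finite K V := inferInstance
  have : Finite V := Module.finite_of_finite K
  have : Fintype V := Fintype.ofFinite V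
  set q := Fintype.card K with hq
  set n := Module.finrank K V with hn
  have hq2 : 2 ≤ q := Fintype.one_lt_card
  have hn1 : 1 ≤ n := Module.finrank_pos
  have hcardV : Fintype.card V = q ^ n := Module.card_eq_pow_finrank
  -- card of each proper subspace ≤ q^(n-1)
  have hsub : ∀ i, Fintype.card (U i) ≤ q ^ (n - 1) := by
    intro i
    have h1 : Fintype.card (U i) = q ^ (Module.finrank K (U i)) := Module.card_eq_pow_finrank
    have h2 : Module.finrank K (U i) < n := Submodule.finrank_lt (hU i)
    rw [h1]
    exact Nat.pow_le_pow_right (by omega) (by omega)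
  by_contra hcontra
  push_neg at hcontra
  -- counting nonzero vectors
  have key : (Set.univ \ {0} : Set V).toFinset ⊆
      Finset.univ.biUnion (fun i => ((U i : Set V) \ {0}).toFinset) := by
    intro x hx
    simp only [Set.mem_toFinset, Set.mem_diff, Set.mem_univ, true_and,
      Set.mem_singleton_iff] at hx
    have : x ∈ ⋃ i, (U i : Set V) := by rw [hcover]; trivial
    obtain ⟨s, ⟨i, rfl⟩, hxs⟩ := this
    simp only [Finset.mem_biUnion, Finset.mem_univ, Set.mem_toFinset, Set.mem_diff,
      Set.mem_singleton_iff]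
    exact ⟨i, trivial, hxs, hx⟩
  have hcard1 : (Set.univ \ {0} : Set V).toFinset.card = q ^ n - 1 := by
    rw [Set.toFinset_diff, Set.toFinset_univ, Set.toFinset_singleton,
      Finset.card_sdiff_of_subset (by simp)]
    simp [← hcardV]
  have hcard2 : ∀ i, ((U i : Set V) \ {0}).toFinset.card ≤ q ^ (n - 1) - 1 := by
    intro i
    rw [Set.toFinset_diff, Set.toFinset_singleton,
      Finset.card_sdiff_of_subset (by simp [(U i).zero_mem])]
    have : (U i : Set V).toFinset.card = Fintype.card (U i) := by
      rw [Set.toFinset_card]; exact Fintype.card_congr (Equiv.refl _)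
    have := hsub i
    simp only [Finset.card_singleton]
    omega
  have hle : q ^ n - 1 ≤ m * (q ^ (n - 1) - 1) := by
    calc q ^ n - 1 = (Set.univ \ {0} : Set V).toFinset.card := hcard1.symm
    _ ≤ (Finset.univ.biUnion (fun i => ((U i : Set V) \ {0}).toFinset)).card :=
        Finset.card_le_card key
    _ ≤ ∑ i : Fin m, ((U i : Set V) \ {0}).toFinset.card := Finset.card_biUnion_le
    _ ≤ ∑ _i : Fin m, (q ^ (n - 1) - 1) := Finset.sum_le_sum (fun i _ => hcard2 i)
    _ = m * (q ^ (n - 1) - 1) := by simp [Finset.sum_const, mul_comm]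
  have hqn : q ^ n = q * q ^ (n - 1) := by
    rw [← pow_succ']
    congr 1
    omega
  have hq1 : 1 ≤ q ^ (n - 1) := Nat.one_le_pow _ _ (by omega)
  have : m * (q ^ (n - 1) - 1) ≤ q * (q ^ (n - 1) - 1) :=
    Nat.mul_le_mul_right _ hcontra
  have hqq : q * (q ^ (n - 1) - 1) = q * q ^ (n - 1) - q := by
    rw [Nat.mul_sub, Nat.mul_one]
  have hge : q ≤ q ^ n := Nat.le_self_pow (by omega) q
  have hfinal : q ^ n - 1 ≤ q ^ n - q := by
    calc q ^ n - 1 ≤ q * (q ^ (n - 1) - 1) := hle.trans this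
    _ = q * q ^ (n - 1) - q := hqq
    _ = q ^ n - q := by rw [← hqn]
  omega
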